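/- arXiv:1709.02562 — 6 statements merged into one kernel-verified Lean document; each statement's English description precedes it below -/
import Mathlib

section
/- There exists a set Σ ⊆ ℝ² such that: Σ is dense in ℝ²; Σ is line-closed; (0, 0) ∈ Σ and (1, 0) ∈ Σ; and (1/2, 0) ∉ Σ. (Hence the midpoint of a segment cannot be constructed with only a straightedge.) -/
noncomputable section

/-- The Euclidean plane ℝ². -/
abbrev Pt := EuclideanSpace ℝ (Fin 2)

/-- The point of ℝ² with coordinates (x, y). -/
def pt (x y : ℝ) : Pt := (WithLp.equiv 2 (Fin 2 → ℝ)).symm ![x, y]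

/-- The line through two points, as a subset of ℝ². -/
def lineThrough (a b : Pt) : Set Pt := {p : Pt | ∃ t : ℝ, p = a + t • (b - a)}

/-- The direction of the line `cd` is parallel to the direction of the line `ab`. -/
def ParallelDir (a b c d : Pt) : Prop := ∃ k : ℝ, d - c = k • (b - a)

/-- `S` is line-closed: for points `b1 b2 b3 b4 ∈ S` with `b1 ≠ b2`, `b3 ≠ b4`, if the lines
`b1b2` and `b3b4` are distinct and not parallel, then their intersection point lies in `S`. -/
def LineClosed (S : Set Pt) : Prop :=
  ∀ b1 b2 b3 b4 : Pt, b1 ∈ S → b2 ∈ S → b3 ∈ S → b4 ∈ S → b1 ≠ b2 → b3 ≠ b4 →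
    lineThrough b1 b2 ≠ lineThrough b3 b4 → ¬ ParallelDir b1 b2 b3 b4 →
    ∀ p : Pt, p ∈ lineThrough b1 b2 → p ∈ lineThrough b3 b4 → p ∈ S

/-- `S` is closed under intersections with the set `C`: every point of `C` lying on a line
through two distinct points of `S` belongs to `S`. -/
def IntClosed (S C : Set Pt) : Prop :=
  ∀ b1 b2 : Pt, b1 ∈ S → b2 ∈ S → b1 ≠ b2 → ∀ p ∈ C, p ∈ lineThrough b1 b2 → p ∈ S

/-- `L ⊆ ℝ²` is a line. -/
def IsLine (L : Set Pt) : Prop := ∃ a b : Pt, a ≠ b ∧ L = lineThrough a b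

/-- The line `L` is tangent to the circle with center `c` and radius `r`:
the distance from `c` to `L` equals `r`. -/
def TangentTo (L : Set Pt) (c : Pt) (r : ℝ) : Prop := Metric.infDist c L = r

local notation "r2" => Real.sqrt 2

def auxV (p : Pt) : Fin 3 → ℝ := ![(r2 - 1) * p 0, p 1, 1 + (r2 - 2) * p 0]

def SS : Set Pt := {p | ∃ w : ℝ, w ≠ 0 ∧ ∃ q : Fin 3 → ℚ, (fun i => (q i : ℝ)) = w • auxV p}

lemma r2_mul : r2 * r2 = 2 := Real.mul_self_sqrt (by norm_num)
lemma r2_ne_one : r2 - 1 ≠ 0 := by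
  have := Real.lt_sqrt (x := 1) (y := 2) (by norm_num); intro h; nlinarith [Real.sq_sqrt (by norm_num : (2:ℝ) ≥ 0), Real.sqrt_nonneg 2]

lemma auxV_ne_zero (p : Pt) : auxV p ≠ 0 := by
  intro h
  have h0 := congrFun h 0
  have h2 := congrFun h 2
  simp [auxV] at h0 h2
  rcases h0 with h0 | h0
  · exact r2_ne_one h0
  · rw [h0] at h2; simp at h2

lemma auxV_affine (a b : Pt) (t : ℝ) :
    auxV (a + t • (b - a)) = auxV a + t • (auxV b - auxV a) := by
  funext i
  fin_cases i <;>
    simp [auxV, PiLp.add_apply, PiLp.smul_apply, PiLp.sub_apply] <;> ring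

lemma auxV_back {a b c : Pt} {α β : ℝ} (h : auxV c = α • auxV a + β • auxV b) :
    c = a + β • (b - a) := by
  have h0 := congrFun h 0
  have h1 := congrFun h 1
  have h2 := congrFun h 2
  simp [auxV, Pi.add_apply, Pi.smul_apply] at h0 h1 h2
  have hc0 : c 0 = α * a 0 + β * b 0 := by
    have := mul_left_cancel₀ r2_ne_one (by linarith [h0] : (r2-1) * c 0 = (r2-1) * (α * a 0 + β * b 0))
    exact this
  have hsum : α + β = 1 := by nlinarith [h2, hc0]
  ext i
  fin_cases i <;> simp [PiLp.add_apply, PiLp.smul_apply, PiLp.sub_apply]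
  · rw [hc0]; linear_combination (a 0) * hsum
  · rw [h1]; linear_combination (a 1) * hsum

lemma auxV_indep {a b : Pt} (hab : a ≠ b) : LinearIndependent ℝ ![auxV a, auxV b] := by
  rw [LinearIndependent.pair_iff]
  intro s t h
  have h0 := congrFun h 0
  have h1 := congrFun h 1
  have h2 := congrFun h 2
  simp [auxV, Pi.add_apply, Pi.smul_apply] at h0 h1 h2
  have hc0 : s * a 0 + t * b 0 = 0 := by
    have : (r2 - 1) * (s * a 0 + t * b 0) = (r2 - 1) * 0 := by ring_nf; ring_nf at h0; linarith
    exact mul_left_cancel₀ r2_ne_one this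
  have hsum : s + t = 0 := by nlinarith [h2, hc0]
  by_cases hs : s = 0
  · constructor; exact hs; linarith
  · exfalso
    apply hab
    have ht : t = -s := by linarith
    rw [ht] at hc0 h1
    ext i; fin_cases i
    · show a 0 = b 0
      have : s * (a 0 - b 0) = 0 := by linarith
      have := mul_eq_zero.mp this
      simp [hs] at this; linarith
    · show a 1 = b 1
      have : s * (a 1 - b 1) = 0 := by linarith
      have := mul_eq_zero.mp this
      simp [hs] at this; linarith

lemma mem_line_iff_span {a b p : Pt} (hab : a ≠ b) :
    p ∈ lineThrough a b ↔ auxV p ∈ Submodule.span ℝ {auxV a, auxV b} := by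
  constructor
  · rintro ⟨t, rfl⟩
    rw [Submodule.mem_span_pair]
    exact ⟨1 - t, t, by rw [auxV_affine]; module⟩
  · intro h
    rw [Submodule.mem_span_pair] at h
    obtain ⟨α, β, h⟩ := h
    exact ⟨β, auxV_back h.symm⟩

lemma span_pair_smul {x y : Fin 3 → ℝ} {w w' : ℝ} (hw : w ≠ 0) (hw' : w' ≠ 0) :
    Submodule.span ℝ {w • x, w' • y} = Submodule.span ℝ {x, y} := by
  apply le_antisymm <;> rw [Submodule.span_le] <;> intro z hz <;>
    simp only [Set.mem_insert_iff, Set.mem_singleton_iff] at hz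
  · rcases hz with h | h <;> rw [h]
    · exact Submodule.smul_mem _ _ (Submodule.subset_span (by simp))
    · exact Submodule.smul_mem _ _ (Submodule.subset_span (by simp))
  · rcases hz with h | h <;> rw [h] <;> rw [SetLike.mem_coe, Submodule.mem_span_pair]
    · exact ⟨w⁻¹, 0, by simp [smul_smul, inv_mul_cancel₀ hw]⟩
    · exact ⟨0, w'⁻¹, by simp [smul_smul, inv_mul_cancel₀ hw']⟩

def c3 (q : Fin 3 → ℚ) : Fin 3 → ℝ := fun i => (q i : ℝ)

lemma c3_comb (a b : ℚ) (q1 q2 : Fin 3 → ℚ) :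
    c3 (a • q1 + b • q2) = (a : ℝ) • c3 q1 + (b : ℝ) • c3 q2 := by
  funext i; simp only [c3, Pi.add_apply, Pi.smul_apply, smul_eq_mul]; push_cast; ring

lemma c3_ne_zero {q : Fin 3 → ℚ} (h : q ≠ 0) : c3 q ≠ 0 := by
  intro hc; apply h; funext i
  have := congrFun hc i; simp [c3] at this; exact_mod_cast this

lemma range_pair {M : Type*} (x y : M) : Set.range ![x, y] = {x, y} := by
  ext z; simp [Matrix.range_cons, Matrix.range_empty]; tauto

lemma q_indep {q1 q2 : Fin 3 → ℚ} (h : LinearIndependent ℝ ![c3 q1, c3 q2]) :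
    LinearIndependent ℚ ![q1, q2] := by
  rw [LinearIndependent.pair_iff]
  intro s t hst
  have : (s : ℝ) • c3 q1 + (t : ℝ) • c3 q2 = 0 := by
    rw [← c3_comb, hst]; funext i; simp [c3]
  have := (LinearIndependent.pair_iff.mp h) s t this
  constructor <;> [exact_mod_cast this.1; exact_mod_cast this.2]

theorem SS_lineClosed : LineClosed SS := by
  rintro b1 b2 b3 b4 hb1 hb2 hb3 hb4 h12 h34 hne - p hp1 hp2
  obtain ⟨w1, hw1, q1, hq1⟩ := hb1
  obtain ⟨w2, hw2, q2, hq2⟩ := hb2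
  obtain ⟨w3, hw3, q3, hq3⟩ := hb3
  obtain ⟨w4, hw4, q4, hq4⟩ := hb4
  have hc1 : c3 q1 = w1 • auxV b1 := hq1
  have hc2 : c3 q2 = w2 • auxV b2 := hq2
  have hc3 : c3 q3 = w3 • auxV b3 := hq3
  have hc4 : c3 q4 = w4 • auxV b4 := hq4
  set U1 : Submodule ℝ (Fin 3 → ℝ) := Submodule.span ℝ {c3 q1, c3 q2} with hU1def
  set U2 : Submodule ℝ (Fin 3 → ℝ) := Submodule.span ℝ {c3 q3, c3 q4} with hU2def
  have hU1 : U1 = Submodule.span ℝ {auxV b1, auxV b2} := by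
    rw [hU1def, hc1, hc2, span_pair_smul hw1 hw2]
  have hU2 : U2 = Submodule.span ℝ {auxV b3, auxV b4} := by
    rw [hU2def, hc3, hc4, span_pair_smul hw3 hw4]
  have hVp1 : auxV p ∈ U1 := hU1 ▸ (mem_line_iff_span h12).mp hp1
  have hVp2 : auxV p ∈ U2 := hU2 ▸ (mem_line_iff_span h34).mp hp2
  -- the spans are distinct
  have hU12 : U1 ≠ U2 := by
    intro h
    apply hne
    have hb3U : auxV b3 ∈ U1 := by
      rw [h, hU2]; exact Submodule.subset_span (by simp)
    have hb4U : auxV b4 ∈ U1 := by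
      rw [h, hU2]; exact Submodule.subset_span (by simp)
    have hb1U : auxV b1 ∈ U2 := by
      rw [← h, hU1]; exact Submodule.subset_span (by simp)
    have hb2U : auxV b2 ∈ U2 := by
      rw [← h, hU1]; exact Submodule.subset_span (by simp)
    ext x
    constructor
    · intro hx
      rw [mem_line_iff_span h12, ← hU1] at hx
      rw [mem_line_iff_span h34, ← hU2, ← h]
      exact hx
    · intro hx
      rw [mem_line_iff_span h34, ← hU2] at hx
      rw [mem_line_iff_span h12, ← hU1, h]
      exact hx
  -- real dimensions
  have hind12 := auxV_indep h12
  have hind34 := auxV_indep h34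
  have find1 : Module.finrank ℝ U1 = 2 := by
    rw [hU1, ← range_pair (auxV b1) (auxV b2), finrank_span_eq_card hind12]
    simp
  have find2 : Module.finrank ℝ U2 = 2 := by
    rw [hU2, ← range_pair (auxV b3) (auxV b4), finrank_span_eq_card hind34]
    simp
  have hlt : U1 < U1 ⊔ U2 := by
    rcases lt_or_eq_of_le (le_sup_left : U1 ≤ U1 ⊔ U2) with h | h
    · exact h
    · exfalso
      have hle : U2 ≤ U1 := by rw [h]; exact le_sup_right
      exact hU12 (Submodule.eq_of_le_of_finrank_le hle (by rw [find1, find2])).symm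
  have hsup3 : Module.finrank ℝ (U1 ⊔ U2 : Submodule ℝ (Fin 3 → ℝ)) = 3 := by
    have h1 : 2 < Module.finrank ℝ (U1 ⊔ U2 : Submodule ℝ (Fin 3 → ℝ)) := by
      rw [← find1]; exact Submodule.finrank_lt_finrank_of_lt hlt
    have h2 : Module.finrank ℝ (U1 ⊔ U2 : Submodule ℝ (Fin 3 → ℝ)) ≤ 3 := by
      have := Submodule.finrank_le (U1 ⊔ U2)
      simpa using this
    omega
  have hinf1 : Module.finrank ℝ (U1 ⊓ U2 : Submodule ℝ (Fin 3 → ℝ)) = 1 := by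
    have := Submodule.finrank_sup_add_finrank_inf_eq U1 U2
    rw [find1, find2, hsup3] at this; omega
  -- rational intersection
  set W1 : Submodule ℚ (Fin 3 → ℚ) := Submodule.span ℚ {q1, q2} with hW1def
  set W2 : Submodule ℚ (Fin 3 → ℚ) := Submodule.span ℚ {q3, q4} with hW2def
  have hqind12 : LinearIndependent ℚ ![q1, q2] := by
    apply q_indep; rw [hc1, hc2]
    rw [LinearIndependent.pair_iff]
    intro s t h
    have : (s * w1) • auxV b1 + (t * w2) • auxV b2 = 0 := by
      rw [← smul_smul, ← smul_smul]; exact h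
    have := (LinearIndependent.pair_iff.mp hind12) _ _ this
    constructor
    · rcases mul_eq_zero.mp this.1 with h | h; exact h; exact absurd h hw1
    · rcases mul_eq_zero.mp this.2 with h | h; exact h; exact absurd h hw2
  have hqind34 : LinearIndependent ℚ ![q3, q4] := by
    apply q_indep; rw [hc3, hc4]
    rw [LinearIndependent.pair_iff]
    intro s t h
    have : (s * w3) • auxV b3 + (t * w4) • auxV b4 = 0 := by
      rw [← smul_smul, ← smul_smul]; exact h
    have := (LinearIndependent.pair_iff.mp hind34) _ _ this
    constructor
    · rcases mul_eq_zero.mp this.1 with h | h; exact h; exact absurd h hw3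
    · rcases mul_eq_zero.mp this.2 with h | h; exact h; exact absurd h hw4
  have fW1 : Module.finrank ℚ W1 = 2 := by
    rw [hW1def, ← range_pair q1 q2, finrank_span_eq_card hqind12]; simp
  have fW2 : Module.finrank ℚ W2 = 2 := by
    rw [hW2def, ← range_pair q3 q4, finrank_span_eq_card hqind34]; simp
  have hWinf : W1 ⊓ W2 ≠ ⊥ := by
    intro hbot
    have := Submodule.finrank_sup_add_finrank_inf_eq W1 W2
    rw [fW1, fW2, hbot] at this
    have hle : Module.finrank ℚ (W1 ⊔ W2 : Submodule ℚ (Fin 3 → ℚ)) ≤ 3 := by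
      have := Submodule.finrank_le (W1 ⊔ W2)
      simpa using this
    simp at this
    omega
  obtain ⟨q, hqmem, hqne⟩ := Submodule.exists_mem_ne_zero_of_ne_bot hWinf
  -- the real image of q lies in U1 ⊓ U2
  have hcq1 : c3 q ∈ U1 := by
    have h1 : q ∈ W1 := hqmem.1
    rw [hW1def, Submodule.mem_span_pair] at h1
    obtain ⟨a, b, hab⟩ := h1
    rw [hU1def, Submodule.mem_span_pair]
    exact ⟨a, b, by rw [← c3_comb, hab]⟩
  have hcq2 : c3 q ∈ U2 := by
    have h1 : q ∈ W2 := hqmem.2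
    rw [hW2def, Submodule.mem_span_pair] at h1
    obtain ⟨a, b, hab⟩ := h1
    rw [hU2def, Submodule.mem_span_pair]
    exact ⟨a, b, by rw [← c3_comb, hab]⟩
  have hcqne : c3 q ≠ 0 := c3_ne_zero hqne
  -- span of c3 q = U1 ⊓ U2
  have hspan : Submodule.span ℝ {c3 q} = U1 ⊓ U2 := by
    apply Submodule.eq_of_le_of_finrank_le
    · rw [Submodule.span_singleton_le_iff_mem]; exact ⟨hcq1, hcq2⟩
    · rw [hinf1, finrank_span_singleton hcqne]
  have hVpmem : auxV p ∈ Submodule.span ℝ {c3 q} := by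
    rw [hspan]; exact ⟨hVp1, hVp2⟩
  rw [Submodule.mem_span_singleton] at hVpmem
  obtain ⟨c, hc⟩ := hVpmem
  have hcne : c ≠ 0 := by
    intro h; rw [h, zero_smul] at hc; exact auxV_ne_zero p hc.symm
  exact ⟨c⁻¹, inv_ne_zero hcne, q, by
    show c3 q = c⁻¹ • auxV p
    rw [← hc, smul_smul, inv_mul_cancel₀ hcne, one_smul]⟩

lemma mem_00 : pt 0 0 ∈ SS := by
  refine ⟨1, one_ne_zero, ![0, 0, 1], ?_⟩
  funext i; fin_cases i <;> simp [auxV, pt]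

lemma mem_10 : pt 1 0 ∈ SS := by
  refine ⟨(r2 - 1)⁻¹, inv_ne_zero r2_ne_one, ![1, 0, 1], ?_⟩
  funext i; fin_cases i <;>
    simp [auxV, pt, Pi.smul_apply, inv_mul_cancel₀ r2_ne_one]
  rw [show 1 + (r2 - 2) = r2 - 1 by ring, inv_mul_cancel₀ r2_ne_one]

lemma not_mem_half : pt (1 / 2) 0 ∉ SS := by
  rintro ⟨w, hw, q, hq⟩
  have h0 := congrFun hq 0
  have h2 := congrFun hq 2
  simp [auxV, pt, Pi.smul_apply] at h0 h2
  -- h0 : (q 0 : ℝ) = w * ((r2 - 1) * (1/2)), h2 : (q 2 : ℝ) = w * (1 + (r2 - 2) * (1/2))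
  have hdiff : (q 2 : ℝ) - (q 0 : ℝ) = w / 2 := by rw [h0, h2]; ring
  have hdne : (q 2 : ℝ) - (q 0 : ℝ) ≠ 0 := by rw [hdiff]; exact div_ne_zero hw two_ne_zero
  have hkey : r2 * ((q 2 : ℝ) - (q 0 : ℝ)) = (q 2 : ℝ) := by
    rw [hdiff, h2]; ring
  have hdq : (q 2 - q 0 : ℚ) ≠ 0 := by
    intro h; apply hdne; exact_mod_cast congrArg (Rat.cast : ℚ → ℝ) h
  apply irrational_sqrt_two
  refine ⟨q 2 / (q 2 - q 0), ?_⟩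
  push_cast
  rw [div_eq_iff hdne]
  linarith [hkey]

def Fmap : ℝ × ℝ → Pt := fun z => pt ((1 + r2) * z.1 / (r2 * z.1 + 1)) (z.2 / (r2 * z.1 + 1))

lemma one_add_r2_ne : (1 : ℝ) + r2 ≠ 0 := by positivity

lemma denom_rat_ne (x : ℚ) : r2 * (x : ℝ) + 1 ≠ 0 := by
  intro h
  rcases eq_or_ne x 0 with rfl | hx
  · simp at h
  · apply irrational_sqrt_two
    refine ⟨-1 / x, ?_⟩
    push_cast
    rw [div_eq_iff (by exact_mod_cast hx)]
    linarith [h]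

lemma Fmap_rat_mem (x y : ℚ) : Fmap ((x : ℝ), (y : ℝ)) ∈ SS := by
  have hD := denom_rat_ne x
  refine ⟨r2 * (x : ℝ) + 1, hD, ![x, y, 1], ?_⟩
  have h2 : r2 ^ 2 = 2 := Real.sq_sqrt (by norm_num)
  funext i; fin_cases i
  · simp only [Fin.zero_eta, Matrix.cons_val_zero, Pi.smul_apply, smul_eq_mul, auxV, Fmap]
    rw [show ((pt ((1 + r2) * x / (r2 * x + 1)) ((y : ℝ) / (r2 * x + 1))) 0 : ℝ) = (1 + r2) * x / (r2 * x + 1) by simp [pt]]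
    rw [mul_div_assoc', mul_div_assoc', mul_div_cancel_left₀ _ hD]
    linear_combination (-(x : ℝ)) * h2
  · simp only [Fin.mk_one, Matrix.cons_val_one, Matrix.cons_val_zero, Matrix.head_cons, Pi.smul_apply, smul_eq_mul, auxV, Fmap]
    rw [show ((pt ((1 + r2) * x / (r2 * x + 1)) ((y : ℝ) / (r2 * x + 1))) 1 : ℝ) = (y : ℝ) / (r2 * x + 1) by simp [pt]]
    field_simp
  · simp only [Matrix.cons_val_two, Matrix.tail_cons, Matrix.head_cons,
      Pi.smul_apply, smul_eq_mul, auxV, Fmap]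
    push_cast
    rw [show ((pt ((1 + r2) * x / (r2 * x + 1)) ((y : ℝ) / (r2 * x + 1))) 0 : ℝ) = (1 + r2) * x / (r2 * x + 1) by simp [pt]]
    field_simp
    linear_combination (-(x : ℝ)) * h2

lemma cont_pt : Continuous fun z : ℝ × ℝ => pt z.1 z.2 := by
  unfold pt
  apply (PiLp.continuous_toLp 2 (fun _ : Fin 2 => ℝ)).comp
  apply continuous_pi
  intro i
  fin_cases i
  · simpa using continuous_fst
  · simpa using continuous_snd

lemma T_sub_closure : {p : Pt | 1 + r2 - r2 * p 0 ≠ 0} ⊆ closure SS := by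
  intro p hp
  simp only [Set.mem_setOf_eq] at hp
  set u := p 0 with hu
  set v := p 1 with hv
  set d := 1 + r2 - r2 * u with hdd
  set x0 := u / d with hx0
  set y0 := v * (1 + r2) / d with hy0
  have hden : r2 * x0 + 1 = (1 + r2) / d := by
    rw [hx0]; field_simp; ring
  have hdne : r2 * x0 + 1 ≠ 0 := by
    rw [hden]; exact div_ne_zero one_add_r2_ne hp
  have hcg : ContinuousAt (fun z : ℝ × ℝ => (((1 + r2) * z.1 / (r2 * z.1 + 1)), (z.2 / (r2 * z.1 + 1)))) (x0, y0) := by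
    apply ContinuousAt.prodMk
    · exact ContinuousAt.div (by fun_prop) (by fun_prop) hdne
    · exact ContinuousAt.div (by fun_prop) (by fun_prop) hdne
  have hcont : ContinuousAt Fmap (x0, y0) := by
    have : Fmap = (fun z : ℝ × ℝ => pt z.1 z.2) ∘
        (fun z : ℝ × ℝ => (((1 + r2) * z.1 / (r2 * z.1 + 1)), (z.2 / (r2 * z.1 + 1)))) := rfl
    rw [this]
    exact (cont_pt.continuousAt).comp hcg
  have hFp : Fmap (x0, y0) = p := by
    unfold Fmap
    have e1 : (1 + r2) * x0 / (r2 * x0 + 1) = u := by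
      rw [hden, hx0]; field_simp
    have e2 : y0 / (r2 * x0 + 1) = v := by
      rw [hden, hy0]; field_simp
    rw [e1, e2]
    ext i
    fin_cases i
    · simp [pt, hu]
    · simp [pt, hv]
  have hQdense : Dense ((Set.range ((↑) : ℚ → ℝ)) ×ˢ (Set.range ((↑) : ℚ → ℝ))) :=
    (Rat.denseRange_cast).prod (Rat.denseRange_cast)
  have hmem : (x0, y0) ∈ closure ((Set.range ((↑) : ℚ → ℝ)) ×ˢ (Set.range ((↑) : ℚ → ℝ))) := by
    rw [hQdense.closure_eq]; trivial
  have himg : p ∈ closure (Fmap '' ((Set.range ((↑) : ℚ → ℝ)) ×ˢ (Set.range ((↑) : ℚ → ℝ)))) := by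
    rw [← hFp]; exact mem_closure_image hcont hmem
  refine closure_mono ?_ himg
  rintro _ ⟨z, ⟨⟨x, hx⟩, ⟨y, hy⟩⟩, rfl⟩
  have : z = ((x : ℝ), (y : ℝ)) := by
    ext <;> simp [← hx, ← hy]
  rw [this]
  exact Fmap_rat_mem x y

lemma SS_dense : Dense SS := by
  have hT : Dense {p : Pt | 1 + r2 - r2 * p 0 ≠ 0} := by
    rw [Metric.dense_iff]
    intro p ε hε
    by_cases hp : 1 + r2 - r2 * p 0 ≠ 0
    · exact ⟨p, Metric.mem_ball_self hε, hp⟩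
    · push_neg at hp
      refine ⟨p + (ε / 2) • EuclideanSpace.single 0 (1 : ℝ), ?_, ?_⟩
      · rw [Metric.mem_ball, dist_self_add_left]
        rw [norm_smul, EuclideanSpace.norm_single]
        simp [abs_of_pos hε]
        linarith
      · simp only [Set.mem_setOf_eq]
        intro hcon
        have hr2 : r2 > 0 := Real.sqrt_pos.mpr (by norm_num)
        simp only [PiLp.add_apply, PiLp.smul_apply, EuclideanSpace.single_apply,
          smul_eq_mul, mul_one] at hcon
        rw [if_pos trivial] at hcon
        nlinarith [hp, hcon, mul_pos hr2 (by linarith : ε / 2 > 0)]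
  intro x
  have := hT x
  have hsub : closure {p : Pt | 1 + r2 - r2 * p 0 ≠ 0} ⊆ closure SS := by
    rw [← closure_closure (s := SS)]
    exact closure_mono T_sub_closure
  exact hsub this

/-- The midpoint of the segment [(0,0), (1,0)] cannot be constructed with only a straightedge:
there is a dense, line-closed set S containing (0,0) and (1,0) but not (1/2, 0). -/
theorem midpoint_not_constructible :
    ∃ S : Set Pt, Dense S ∧ LineClosed S ∧
      pt 0 0 ∈ S ∧ pt 1 0 ∈ S ∧ pt (1 / 2) 0 ∉ S := by
  exact ⟨SS, SS_dense, SS_lineClosed, mem_00, mem_10, not_mem_half⟩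
end
end

section
/- Let C = {p ∈ ℝ² : dist(p, (0,0)) = 1} be the unit circle. There exists a set Σ ⊆ ℝ² such that: Σ is dense in ℝ²; Σ is line-closed; Σ is closed under intersections with C; and (0, 0) ∉ Σ. (Hence the center of a circle cannot be constructed with only a straightedge — Hilbert's theorem.) -/
noncomputable section

/-! ### Auxiliary development -/

@[simp] lemma pt_app0 (x y : ℝ) : pt x y 0 = x := rfl
@[simp] lemma pt_app1 (x y : ℝ) : pt x y 1 = y := rfl

lemma pt_eta (p : Pt) : p = pt (p 0) (p 1) := by
  ext i; fin_cases i <;> simp [pt]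

lemma pt_congr {x y x' y' : ℝ} (hx : x = x') (hy : y = y') : pt x y = pt x' y' := by
  rw [hx, hy]

lemma pt_inj {x y x' y' : ℝ} (h : pt x y = pt x' y') : x = x' ∧ y = y' :=
  ⟨congrArg (· 0) h, congrArg (· 1) h⟩

lemma line_coord {a b p : Pt} (h : p ∈ lineThrough a b) :
    ∃ t : ℝ, p 0 = a 0 + t * (b 0 - a 0) ∧ p 1 = a 1 + t * (b 1 - a 1) := by
  obtain ⟨t, ht⟩ := h
  exact ⟨t, by rw [ht]; simp, by rw [ht]; simp⟩

lemma line_coord_rev {a b p : Pt} (t : ℝ) (h0 : p 0 = a 0 + t * (b 0 - a 0))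
    (h1 : p 1 = a 1 + t * (b 1 - a 1)) : p ∈ lineThrough a b := by
  refine ⟨t, ?_⟩
  rw [pt_eta p, h0, h1]
  ext i; fin_cases i <;> simp [pt]

lemma circle_coord {p : Pt} : dist p (pt 0 0) = 1 ↔ (p 0)^2 + (p 1)^2 = 1 := by
  rw [EuclideanSpace.dist_eq]
  rw [show Real.sqrt (∑ i, dist (p i) (pt 0 0 i)^2) = Real.sqrt ((p 0)^2 + (p 1)^2) by
    congr 1; simp [Fin.sum_univ_two, pt, Real.dist_eq, sq_abs]]
  constructor
  · intro h
    have h2 : (Real.sqrt ((p 0)^2 + (p 1)^2))^2 = 1 := by rw [h]; norm_num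
    rwa [Real.sq_sqrt (by positivity)] at h2
  · intro h; rw [h]; simp

/-! ### Algebraic numbers -/

def Alg (x : ℝ) : Prop := IsAlgebraic ℚ x

lemma Alg.add {x y : ℝ} (hx : Alg x) (hy : Alg y) : Alg (x + y) :=
  isAlgebraic_iff_isIntegral.2
    ((isAlgebraic_iff_isIntegral.1 hx).add (isAlgebraic_iff_isIntegral.1 hy))
lemma Alg.mul {x y : ℝ} (hx : Alg x) (hy : Alg y) : Alg (x * y) :=
  isAlgebraic_iff_isIntegral.2
    ((isAlgebraic_iff_isIntegral.1 hx).mul (isAlgebraic_iff_isIntegral.1 hy))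
lemma Alg.neg {x : ℝ} (hx : Alg x) : Alg (-x) :=
  isAlgebraic_iff_isIntegral.2 (isAlgebraic_iff_isIntegral.1 hx).neg
lemma Alg.sub {x y : ℝ} (hx : Alg x) (hy : Alg y) : Alg (x - y) := by
  rw [sub_eq_add_neg]; exact hx.add hy.neg
lemma Alg.inv {x : ℝ} (hx : Alg x) : Alg x⁻¹ := IsAlgebraic.inv hx
lemma Alg.div {x y : ℝ} (hx : Alg x) (hy : Alg y) : Alg (x / y) := by
  rw [div_eq_mul_inv]; exact hx.mul hy.inv
lemma Alg.ratCast (q : ℚ) : Alg (q : ℝ) := isAlgebraic_algebraMap q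
lemma Alg.zero : Alg 0 := by simpa using Alg.ratCast 0
lemma Alg.one : Alg 1 := by simpa using Alg.ratCast 1
lemma Alg.two : Alg 2 := by simpa using Alg.ratCast 2
lemma Alg.four : Alg 4 := by simpa using Alg.ratCast 4
lemma Alg.square {x : ℝ} (hx : Alg x) : Alg (x ^ 2) := by rw [pow_two]; exact hx.mul hx
lemma Alg.of_sq {x : ℝ} (hx : Alg (x ^ 2)) : Alg x := IsAlgebraic.of_pow two_pos hx

lemma quad_alg {A B C x : ℝ} (hA : Alg A) (hB : Alg B) (hC : Alg C)
    (h : A * x ^ 2 + B * x + C = 0) (hne : ¬(A = 0 ∧ B = 0 ∧ C = 0)) : Alg x := by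
  by_cases hA0 : A = 0
  · by_cases hB0 : B = 0
    · exact absurd ⟨hA0, hB0, by linear_combination h - x^2 * hA0 - x * hB0⟩ hne
    · have hx : x = -C / B := by field_simp; linear_combination h - x^2*hA0
      rw [hx]; exact hC.neg.div hB
  · have key : (2*A*x + B) ^ 2 = B^2 - 4*A*C := by linear_combination 4*A*h
    have hD : Alg ((2*A*x + B) ^ 2) := by
      rw [key]; exact hB.square.sub ((Alg.four.mul hA).mul hC)
    have hx : x = ((2*A*x + B) - B) / (2*A) := by field_simp; ring
    rw [hx]; exact (hD.of_sq.sub hB).div (Alg.two.mul hA)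

/-! ### The transcendental parameters -/

def sν : ℝ := liouvilleNumber 3

lemma s_trans : ¬ Alg sν := by
  have h := transcendental_liouvilleNumber (by norm_num : 2 ≤ 3)
  intro hA
  exact h ((IsFractionRing.isAlgebraic_iff ℤ ℚ ℝ).2 hA)

lemma s_ne : sν ≠ 0 := fun h => s_trans (h ▸ Alg.zero)

def cν : ℝ := Real.sqrt (1 + sν ^ 2)
lemma c_sq : cν ^ 2 = 1 + sν ^ 2 := Real.sq_sqrt (by positivity)
lemma c_pos : 0 < cν := Real.sqrt_pos.2 (by positivity)
lemma c_ne : cν ≠ 0 := ne_of_gt c_pos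

/-- the ratio s/c is not algebraic -/
lemma ratio_trans {r : ℝ} (hr : Alg r) : sν ≠ r * cν := by
  intro h
  have h1 : cν ^ 2 * (1 - r^2) = 1 := by
    linear_combination c_sq + (sν + r*cν) * h
  have hr2 : (1 : ℝ) - r^2 ≠ 0 := by
    intro h0; rw [h0, mul_zero] at h1; norm_num at h1
  have hc2alg : Alg (cν ^ 2) := by
    have : cν ^ 2 = 1 / (1 - r^2) := by field_simp; linear_combination h1
    rw [this]; exact Alg.one.div (Alg.one.sub hr.square)
  exact s_trans (h ▸ hr.mul hc2alg.of_sq)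

/-! ### Vectors in ℝ³ -/

abbrev V3 := Fin 3 → ℝ

def dot3 (u v : V3) : ℝ := u 0 * v 0 + u 1 * v 1 + u 2 * v 2

def cr (u v : V3) : V3 := ![u 1 * v 2 - u 2 * v 1, u 2 * v 0 - u 0 * v 2, u 0 * v 1 - u 1 * v 0]

@[simp] lemma cr0 (u v : V3) : cr u v 0 = u 1 * v 2 - u 2 * v 1 := rfl
@[simp] lemma cr1 (u v : V3) : cr u v 1 = u 2 * v 0 - u 0 * v 2 := rfl
@[simp] lemma cr2 (u v : V3) : cr u v 2 = u 0 * v 1 - u 1 * v 0 := rfl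
@[simp] lemma smul_ap (k : ℝ) (u : V3) (i : Fin 3) : (k • u) i = k * u i := rfl
@[simp] lemma add_ap (u v : V3) (i : Fin 3) : (u + v) i = u i + v i := rfl

lemma dot_cr_combo (u v : V3) (a b : ℝ) : dot3 (cr u v) (a • u + b • v) = 0 := by
  simp [dot3]; ring

lemma cramer (u v w : V3) :
    (dot3 (cr u v) (cr u v)) • w = (dot3 (cr u v) w) • (cr u v)
      + ((dot3 w u) * (dot3 v v) - (dot3 w v) * (dot3 u v)) • u
      + ((dot3 w v) * (dot3 u u) - (dot3 w u) * (dot3 u v)) • v := by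
  funext i; fin_cases i <;> (simp [dot3]; ring)

lemma parallel (u v : V3) (h : cr u v = 0) (hu : u ≠ 0) : ∃ k : ℝ, v = k • u := by
  have h0 := congrFun h 0
  have h1 := congrFun h 1
  have h2 := congrFun h 2
  simp [cr] at h0 h1 h2
  have hne : u 0 ≠ 0 ∨ u 1 ≠ 0 ∨ u 2 ≠ 0 := by
    by_contra hc; push_neg at hc
    exact hu (funext fun i => by fin_cases i <;> simp [hc.1, hc.2.1, hc.2.2])
  rcases hne with hi | hi | hi
  · exact ⟨v 0 / u 0, funext fun j => by
      fin_cases j <;> simp <;> field_simp <;>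
        first | linear_combination h0 | linear_combination -h0 | linear_combination h1 |
          linear_combination -h1 | linear_combination h2 | linear_combination -h2 | ring⟩
  · exact ⟨v 1 / u 1, funext fun j => by
      fin_cases j <;> simp <;> field_simp <;>
        first | linear_combination h0 | linear_combination -h0 | linear_combination h1 |
          linear_combination -h1 | linear_combination h2 | linear_combination -h2 | ring⟩
  · exact ⟨v 2 / u 2, funext fun j => by
      fin_cases j <;> simp <;> field_simp <;>
        first | linear_combination h0 | linear_combination -h0 | linear_combination h1 |
          linear_combination -h1 | linear_combination h2 | linear_combination -h2 | ring⟩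

lemma baccab (n1 n2 w : V3) : cr (cr n1 n2) w = (dot3 n1 w) • n2 - (dot3 n2 w) • n1 := by
  funext i; fin_cases i <;> (simp [dot3]; ring)

lemma solve2 {n1 n2 w : V3} (h1 : dot3 n1 w = 0) (h2 : dot3 n2 w = 0)
    (hn : cr n1 n2 ≠ 0) : ∃ k : ℝ, w = k • cr n1 n2 := by
  have hb : cr (cr n1 n2) w = 0 := by rw [baccab, h1, h2]; simp
  exact parallel _ _ hb hn

/-! ### The projective transformation -/

def Mv (w : V3) : V3 := ![cν * w 0 + sν * w 2, w 1, sν * w 0 + cν * w 2]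

@[simp] lemma Mv0 (w : V3) : Mv w 0 = cν * w 0 + sν * w 2 := rfl
@[simp] lemma Mv1 (w : V3) : Mv w 1 = w 1 := rfl
@[simp] lemma Mv2 (w : V3) : Mv w 2 = sν * w 0 + cν * w 2 := rfl

lemma Mv_comb (a b : ℝ) (u v : V3) (i : Fin 3) :
    Mv (a • u + b • v) i = a * Mv u i + b * Mv v i := by
  fin_cases i <;> simp <;> ring

lemma Mv_smul (k : ℝ) (u : V3) (i : Fin 3) : Mv (k • u) i = k * Mv u i := by
  fin_cases i <;> simp <;> ring

lemma Mv_inj {u v : V3} (h : ∀ i, Mv u i = Mv v i) : u = v := by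
  have h0 := h 0; have h1 := h 1; have h2 := h 2
  simp at h0 h1 h2
  funext i; fin_cases i
  · show u 0 = v 0
    linear_combination cν*h0 - sν*h2 - (u 0 - v 0)*c_sq
  · exact h1
  · show u 2 = v 2
    linear_combination cν*h2 - sν*h0 - (u 2 - v 2)*c_sq

lemma qinv (w : V3) : (Mv w 0)^2 + (Mv w 1)^2 - (Mv w 2)^2 = w 0^2 + w 1^2 - w 2^2 := by
  simp; linear_combination (w 0^2 - w 2^2) * c_sq

lemma Mv_nonzero {w : V3} (h : Mv w 2 ≠ 0) : w ≠ 0 := by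
  intro h0; rw [h0] at h; simp at h

/-- the map to the plane -/
def φ (w : V3) : Pt := pt (Mv w 0 / Mv w 2) (Mv w 1 / Mv w 2)

lemma φ_smul {k : ℝ} (hk : k ≠ 0) (w : V3) : φ (k • w) = φ w := by
  unfold φ
  rw [Mv_smul, Mv_smul, Mv_smul, mul_div_mul_left _ _ hk, mul_div_mul_left _ _ hk]

def AlgV (w : V3) : Prop := ∀ i, Alg (w i)

lemma AlgV_cr {u v : V3} (hu : AlgV u) (hv : AlgV v) : AlgV (cr u v) := by
  intro i; fin_cases i <;> simp <;>
    exact ((hu _).mul (hv _)).sub ((hu _).mul (hv _))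

/-- The magic set. -/
def Sset : Set Pt := {p : Pt | ∃ w : V3, AlgV w ∧ Mv w 2 ≠ 0 ∧ p = φ w}

lemma mem_Sset {w : V3} (hA : AlgV w) (h2 : Mv w 2 ≠ 0) : φ w ∈ Sset := ⟨w, hA, h2, rfl⟩

/-! ### line structure lemmas -/

lemma line_to_w {w1 w2 : V3} (h1 : Mv w1 2 ≠ 0) (h2 : Mv w2 2 ≠ 0) {p : Pt}
    (hp : p ∈ lineThrough (φ w1) (φ w2)) :
    ∃ w : V3, Mv w 2 = 1 ∧ dot3 (cr w1 w2) w = 0 ∧ p = φ w := by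
  obtain ⟨t, hp0, hp1⟩ := line_coord hp
  set W : V3 := ((1-t)/(Mv w1 2)) • w1 + (t/(Mv w2 2)) • w2 with hW
  have e2 : Mv W 2 = 1 := by
    rw [hW, Mv_comb, div_mul_cancel₀ _ h1, div_mul_cancel₀ _ h2]
    ring
  refine ⟨W, e2, dot_cr_combo _ _ _ _, ?_⟩
  have c0 : φ W 0 = (1-t)/(Mv w1 2) * Mv w1 0 + t/(Mv w2 2) * Mv w2 0 := by
    show Mv W 0 / Mv W 2 = _
    rw [e2, div_one, hW, Mv_comb]
  have c1 : φ W 1 = (1-t)/(Mv w1 2) * Mv w1 1 + t/(Mv w2 2) * Mv w2 1 := by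
    show Mv W 1 / Mv W 2 = _
    rw [e2, div_one, hW, Mv_comb]
  rw [pt_eta p, pt_eta (φ W), c0, c1, hp0, hp1]
  have a0 : φ w1 0 = Mv w1 0 / Mv w1 2 := rfl
  have a1 : φ w1 1 = Mv w1 1 / Mv w1 2 := rfl
  have b0 : φ w2 0 = Mv w2 0 / Mv w2 2 := rfl
  have b1 : φ w2 1 = Mv w2 1 / Mv w2 2 := rfl
  rw [a0, a1, b0, b1]
  refine pt_congr ?_ ?_ <;> (field_simp; try ring)

lemma affine_comb {A B z1 z2 al be N : ℝ} (h1 : z1 ≠ 0) (h2 : z2 ≠ 0) (hN : N ≠ 0)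
    (hsum : al * z1 + be * z2 = N) :
    al/N * A + be/N * B = A/z1 + (be/N * z2) * (B/z2 - A/z1) := by
  field_simp
  linear_combination (A) * hsum

lemma w_to_line {w1 w2 : V3} (h1 : Mv w1 2 ≠ 0) (h2 : Mv w2 2 ≠ 0)
    (hcr : cr w1 w2 ≠ 0) {w : V3} (hw2 : Mv w 2 = 1) (hd : dot3 (cr w1 w2) w = 0) :
    φ w ∈ lineThrough (φ w1) (φ w2) := by
  have hNN : dot3 (cr w1 w2) (cr w1 w2) ≠ 0 := by
    intro h0
    apply hcr
    have hsq : cr w1 w2 0 ^2 + cr w1 w2 1 ^2 + cr w1 w2 2 ^2 = 0 := by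
      simpa [dot3, pow_two] using h0
    have e0 : cr w1 w2 0 = 0 := by nlinarith
    have e1 : cr w1 w2 1 = 0 := by nlinarith
    have e2 : cr w1 w2 2 = 0 := by nlinarith
    funext i; fin_cases i
    · show cr w1 w2 0 = (0:V3) 0; rw [e0]; rfl
    · show cr w1 w2 1 = (0:V3) 1; rw [e1]; rfl
    · show cr w1 w2 2 = (0:V3) 2; rw [e2]; rfl
  set N := dot3 (cr w1 w2) (cr w1 w2) with hN
  set α := (dot3 w w1) * (dot3 w2 w2) - (dot3 w w2) * (dot3 w1 w2) with hα
  set β := (dot3 w w2) * (dot3 w1 w1) - (dot3 w w1) * (dot3 w1 w2) with hβ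
  have hrep : w = (α/N) • w1 + (β/N) • w2 := by
    have hcram := cramer w1 w2 w
    rw [hd] at hcram
    simp only [zero_smul, zero_add] at hcram
    funext i
    have hi := congrFun hcram i
    simp at hi ⊢
    field_simp
    linear_combination hi
  have hsum : α * Mv w1 2 + β * Mv w2 2 = N := by
    have h := hw2
    conv at h => rw [hrep, Mv_comb]
    field_simp at h
    simp only [Mv2] at h ⊢
    linear_combination h
  have a0 : φ w1 0 = Mv w1 0 / Mv w1 2 := rfl
  have a1 : φ w1 1 = Mv w1 1 / Mv w1 2 := rfl
  have b0 : φ w2 0 = Mv w2 0 / Mv w2 2 := rfl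
  have b1 : φ w2 1 = Mv w2 1 / Mv w2 2 := rfl
  apply line_coord_rev ((β/N) * Mv w2 2)
  · show Mv w 0 / Mv w 2 = _
    rw [hw2, div_one, a0, b0]
    conv_lhs => rw [hrep, Mv_comb]
    exact affine_comb h1 h2 hNN hsum
  · show Mv w 1 / Mv w 2 = _
    rw [hw2, div_one, a1, b1]
    conv_lhs => rw [hrep, Mv_comb]
    exact affine_comb h1 h2 hNN hsum

lemma third_coord {a b c : ℝ} (hx : a + c ≠ 0) (hq : a^2 + b^2 - c^2 = 0) :
    c = (a + c)/2 * (1 + (b/(a+c))^2) := by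
  field_simp
  linear_combination (-1) * hq

lemma dot3_smul_right (n w : V3) (k : ℝ) : dot3 n (k • w) = k * dot3 n w := by
  simp [dot3]; ring

lemma cr_ne {w1 w2 : V3} (h1 : Mv w1 2 ≠ 0) (h2 : Mv w2 2 ≠ 0) (hne : φ w1 ≠ φ w2) :
    cr w1 w2 ≠ 0 := by
  intro h0
  obtain ⟨k, hk⟩ := parallel w1 w2 h0 (Mv_nonzero h1)
  have hk0 : k ≠ 0 := by
    rintro rfl
    apply h2
    rw [show Mv w2 2 = Mv ((0:ℝ) • w1) 2 from by rw [← hk], Mv_smul, zero_mul]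
  exact hne ((φ_smul hk0 w1 ▸ (hk ▸ rfl : φ w2 = φ (k • w1))).symm)

lemma lineClosed_Sset : LineClosed Sset := by
  intro b1 b2 b3 b4 hb1 hb2 hb3 hb4 h12 h34 hll _hpar p hp12 hp34
  obtain ⟨w1, A1, z1, rfl⟩ := hb1
  obtain ⟨w2, A2, z2, rfl⟩ := hb2
  obtain ⟨w3, A3, z3, rfl⟩ := hb3
  obtain ⟨w4, A4, z4, rfl⟩ := hb4
  have hn1 : cr w1 w2 ≠ 0 := cr_ne z1 z2 h12
  have hn2 : cr w3 w4 ≠ 0 := cr_ne z3 z4 h34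
  obtain ⟨w, hw2, hd1, hpw⟩ := line_to_w z1 z2 hp12
  obtain ⟨w', hw2', hd2, hpw'⟩ := line_to_w z3 z4 hp34
  have hφ : φ w = φ w' := hpw ▸ hpw'
  have hww : w = w' := by
    have h0 := (pt_inj hφ).1
    have h1 := (pt_inj hφ).2
    rw [hw2, hw2', div_one, div_one] at h0 h1
    exact Mv_inj fun i => by fin_cases i <;> [exact h0; exact h1; exact hw2.trans hw2'.symm]
  rw [← hww] at hd2
  by_cases hcross : cr (cr w1 w2) (cr w3 w4) = 0
  · exfalso
    apply hll
    obtain ⟨k, hk⟩ := parallel _ _ hcross hn1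
    have hk0 : k ≠ 0 := by
      rintro rfl
      apply hn2
      rw [hk]
      funext i; simp
    ext q
    constructor
    · intro hq
      obtain ⟨u, hu2, hud, rfl⟩ := line_to_w z1 z2 hq
      have : dot3 (cr w3 w4) u = 0 := by
        rw [hk, show dot3 (k • cr w1 w2) u = k * dot3 (cr w1 w2) u from by simp [dot3]; ring,
          hud, mul_zero]
      exact w_to_line z3 z4 hn2 hu2 this
    · intro hq
      obtain ⟨u, hu2, hud, rfl⟩ := line_to_w z3 z4 hq
      have h1' : dot3 (k • cr w1 w2) u = 0 := hk ▸ hud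
      have h2' : k * dot3 (cr w1 w2) u = 0 := by
        rw [← h1']; simp [dot3]; ring
      have : dot3 (cr w1 w2) u = 0 := (mul_eq_zero.1 h2').resolve_left hk0
      exact w_to_line z1 z2 hn1 hu2 this
  · obtain ⟨k, hk⟩ := solve2 hd1 hd2 hcross
    have hwne : w ≠ 0 := Mv_nonzero (hw2 ▸ one_ne_zero)
    have hk0 : k ≠ 0 := by rintro rfl; apply hwne; rw [hk, zero_smul]
    have hz2 : Mv (cr (cr w1 w2) (cr w3 w4)) 2 ≠ 0 := by
      intro hz
      apply one_ne_zero (α := ℝ)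
      rw [← hw2, hk, Mv_smul, hz, mul_zero]
    refine ⟨cr (cr w1 w2) (cr w3 w4), AlgV_cr (AlgV_cr A1 A2) (AlgV_cr A3 A4), hz2, ?_⟩
    rw [hpw, hk, φ_smul hk0]

lemma intClosed_Sset : IntClosed Sset {p : Pt | dist p (pt 0 0) = 1} := by
  intro b1 b2 hb1 hb2 hne p hpC hpl
  obtain ⟨w1, A1, z1, rfl⟩ := hb1
  obtain ⟨w2, A2, z2, rfl⟩ := hb2
  have hn1 : cr w1 w2 ≠ 0 := cr_ne z1 z2 hne
  obtain ⟨w, hw2, hd, rfl⟩ := line_to_w z1 z2 hpl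
  have hC : (Mv w 0)^2 + (Mv w 1)^2 = 1 := by
    have := circle_coord.1 hpC
    simpa [φ, hw2] using this
  have hq : w 0^2 + w 1^2 - w 2^2 = 0 := by
    rw [← qinv w, hw2]; linarith [hC]
  have hw2' : Mv w 2 = 1 := hw2
  by_cases hx : w 0 + w 2 = 0
  · -- the point (-1, 0) on the circle
    have h1sq : w 1 ^ 2 = 0 := by linear_combination hq - (w 0 - w 2) * hx
    have h1 : w 1 = 0 := by
      have := sq_eq_zero_iff.1 h1sq
      exact this
    have hk0 : w 2 ≠ 0 := by
      intro h20
      apply Mv_nonzero (hw2 ▸ one_ne_zero)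
      funext i; fin_cases i <;>
        [skip; exact h1; exact h20] <;> (show w 0 = 0; linarith)
    have hrep : w = w 2 • (![(-1:ℝ), 0, 1] : V3) := by
      funext i
      fin_cases i
      · show w 0 = w 2 * (-1); linarith
      · show w 1 = w 2 * 0; rw [h1, mul_zero]
      · show w 2 = w 2 * 1; rw [mul_one]
    have hz2 : Mv (![(-1:ℝ), 0, 1] : V3) 2 ≠ 0 := by
      intro hz
      apply one_ne_zero (α := ℝ)
      rw [← hw2, hrep, Mv_smul, hz, mul_zero]
    refine ⟨![(-1:ℝ), 0, 1], ?_, hz2, ?_⟩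
    · intro i; fin_cases i
      · exact Alg.one.neg
      · exact Alg.zero
      · exact Alg.one
    · rw [hrep, φ_smul hk0]
  · set u : ℝ := w 1 / (w 0 + w 2) with hu
    set z : V3 := ![1 - u^2, 2*u, 1 + u^2] with hz
    have hrep : w = ((w 0 + w 2)/2) • z := by
      funext i
      fin_cases i
      · show w 0 = (w 0 + w 2)/2 * (1 - u^2)
        rw [hu]; field_simp; linear_combination (1) * hq
      · show w 1 = (w 0 + w 2)/2 * (2*u)
        rw [hu]; field_simp; try ring
      · show w 2 = (w 0 + w 2)/2 * (1 + u^2)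
        rw [hu]; exact third_coord hx hq
    have hk0 : (w 0 + w 2)/2 ≠ 0 := by
      intro h; apply hx; linarith [h]
    -- u is algebraic
    have hdz : dot3 (cr w1 w2) z = 0 := by
      have := hd
      rw [hrep, dot3_smul_right] at this
      exact (mul_eq_zero.1 this).resolve_left hk0
    have hAn : AlgV (cr w1 w2) := AlgV_cr A1 A2
    have hquad : (cr w1 w2 2 - cr w1 w2 0) * u^2 + (2 * cr w1 w2 1) * u
        + (cr w1 w2 0 + cr w1 w2 2) = 0 := by
      have : cr w1 w2 0 * (1 - u^2) + cr w1 w2 1 * (2*u) + cr w1 w2 2 * (1 + u^2) = 0 := by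
        simpa [dot3, hz] using hdz
      linear_combination this
    have hAu : Alg u := by
      apply quad_alg ((hAn 2).sub (hAn 0)) (Alg.two.mul (hAn 1)) ((hAn 0).add (hAn 2)) hquad
      rintro ⟨e1, e2, e3⟩
      apply hn1
      funext i
      have c0 : cr w1 w2 0 = 0 := by linarith [e1, e3]
      have c2 : cr w1 w2 2 = 0 := by linarith [e1, e3]
      have c1 : cr w1 w2 1 = 0 := by linarith [e2]
      fin_cases i
      · show cr w1 w2 0 = (0:V3) 0; rw [c0]; rfl
      · show cr w1 w2 1 = (0:V3) 1; rw [c1]; rfl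
      · show cr w1 w2 2 = (0:V3) 2; rw [c2]; rfl
    have hAz : AlgV z := by
      intro i; fin_cases i
      · exact Alg.one.sub hAu.square
      · exact Alg.two.mul hAu
      · exact Alg.one.add hAu.square
    have hz2 : Mv z 2 ≠ 0 := by
      intro hzz
      apply one_ne_zero (α := ℝ)
      rw [← hw2, hrep, Mv_smul, hzz, mul_zero]
    exact ⟨z, hAz, hz2, by rw [hrep, φ_smul hk0]⟩

lemma center_not_mem : pt 0 0 ∉ Sset := by
  rintro ⟨w, hA, h2, he⟩
  have h0 : Mv w 0 / Mv w 2 = 0 := ((pt_inj he).1).symm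
  have h00 : Mv w 0 = 0 := by
    rcases div_eq_zero_iff.1 h0 with h | h
    · exact h
    · exact absurd h h2
  have hcs : cν * w 0 + sν * w 2 = 0 := h00
  have hw0 : w 0 ≠ 0 := by
    intro h
    rw [h, mul_zero, zero_add] at hcs
    have h2' : w 2 = 0 := by
      rcases mul_eq_zero.1 hcs with hh | hh
      · exact absurd hh s_ne
      · exact hh
    apply h2
    show sν * w 0 + cν * w 2 = 0
    rw [h, h2']; ring
  have hw2 : w 2 ≠ 0 := by
    intro h
    rw [h, mul_zero, add_zero] at hcs
    have h0' : w 0 = 0 := by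
      rcases mul_eq_zero.1 hcs with hh | hh
      · exact absurd hh c_ne
      · exact hh
    exact hw0 h0'
  apply ratio_trans (r := -(w 0 / w 2)) ((hA 0).div (hA 2)).neg
  field_simp
  linear_combination hcs

lemma pt_dist_le (a b a' b' : ℝ) : dist (pt a b) (pt a' b') ≤ |a - a'| + |b - b'| := by
  rw [EuclideanSpace.dist_eq]
  rw [show (∑ i, dist (pt a b i) (pt a' b' i)^2) = (a - a')^2 + (b - b')^2 by
    simp [Fin.sum_univ_two, Real.dist_eq, sq_abs]]
  calc Real.sqrt ((a - a')^2 + (b - b')^2) ≤ Real.sqrt ((|a - a'| + |b - b'|)^2) := by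
        apply Real.sqrt_le_sqrt
        nlinarith [sq_abs (a - a'), sq_abs (b - b'),
          mul_nonneg (abs_nonneg (a - a')) (abs_nonneg (b - b'))]
    _ = |a - a'| + |b - b'| := Real.sqrt_sq (by positivity)

lemma dense_Sset : Dense Sset := by
  rw [Metric.dense_iff]
  intro x r hr
  set w₀ : V3 := ![cν * x 0 - sν * 1, x 1, -sν * x 0 + cν * 1] with hw₀
  have e0 : Mv w₀ 0 = x 0 := by
    show cν * w₀ 0 + sν * w₀ 2 = x 0
    show cν * (cν * x 0 - sν * 1) + sν * (-sν * x 0 + cν * 1) = x 0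
    linear_combination (x 0) * c_sq
  have e1 : Mv w₀ 1 = x 1 := rfl
  have e2 : Mv w₀ 2 = 1 := by
    show sν * (cν * x 0 - sν * 1) + cν * (-sν * x 0 + cν * 1) = 1
    linear_combination c_sq
  have hc0 : Continuous (fun w : V3 => Mv w 0) := by
    simp only [Mv0]; fun_prop
  have hc1 : Continuous (fun w : V3 => Mv w 1) := by
    simp only [Mv1]; fun_prop
  have hc2 : Continuous (fun w : V3 => Mv w 2) := by
    simp only [Mv2]; fun_prop
  have hg0 : ContinuousAt (fun w : V3 => Mv w 0 / Mv w 2) w₀ :=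
    hc0.continuousAt.div hc2.continuousAt (by rw [e2]; norm_num)
  have hg1 : ContinuousAt (fun w : V3 => Mv w 1 / Mv w 2) w₀ :=
    hc1.continuousAt.div hc2.continuousAt (by rw [e2]; norm_num)
  obtain ⟨δ0, hδ0, H0⟩ := Metric.continuousAt_iff.1 hg0 (r/4) (by positivity)
  obtain ⟨δ1, hδ1, H1⟩ := Metric.continuousAt_iff.1 hg1 (r/4) (by positivity)
  obtain ⟨δ2, hδ2, H2⟩ := Metric.continuousAt_iff.1 hc2.continuousAt (1/2) (by norm_num)
  set δ := min δ0 (min δ1 δ2) with hδ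
  have hδpos : 0 < δ := lt_min hδ0 (lt_min hδ1 hδ2)
  obtain ⟨q0, hq0⟩ := exists_rat_near (w₀ 0) hδpos
  obtain ⟨q1, hq1⟩ := exists_rat_near (w₀ 1) hδpos
  obtain ⟨q2, hq2⟩ := exists_rat_near (w₀ 2) hδpos
  set w : V3 := ![(q0 : ℝ), (q1 : ℝ), (q2 : ℝ)] with hw
  have hdist : dist w w₀ < δ := by
    rw [dist_pi_lt_iff hδpos]
    intro i
    fin_cases i
    · show dist ((q0 : ℝ)) (w₀ 0) < δ; rw [Real.dist_eq, abs_sub_comm]; exact hq0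
    · show dist ((q1 : ℝ)) (w₀ 1) < δ; rw [Real.dist_eq, abs_sub_comm]; exact hq1
    · show dist ((q2 : ℝ)) (w₀ 2) < δ; rw [Real.dist_eq, abs_sub_comm]; exact hq2
  have hd0 : dist w w₀ < δ0 := lt_of_lt_of_le hdist (min_le_left _ _)
  have hd1 : dist w w₀ < δ1 :=
    lt_of_lt_of_le hdist (le_trans (min_le_right _ _) (min_le_left _ _))
  have hd2 : dist w w₀ < δ2 :=
    lt_of_lt_of_le hdist (le_trans (min_le_right _ _) (min_le_right _ _))
  have hMw2 : Mv w 2 ≠ 0 := by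
    have := H2 hd2
    rw [Real.dist_eq, e2] at this
    intro h; rw [h] at this
    rw [abs_sub_comm] at this
    simp at this
    linarith [this]
  have hAw : AlgV w := by
    intro i; fin_cases i <;> exact Alg.ratCast _
  refine ⟨φ w, ?_, mem_Sset hAw hMw2⟩
  rw [Metric.mem_ball]
  have k0 := H0 hd0
  have k1 := H1 hd1
  rw [Real.dist_eq] at k0 k1
  rw [e2, div_one] at k0 k1
  rw [e0] at k0
  rw [e1] at k1
  calc dist (φ w) x = dist (pt (Mv w 0 / Mv w 2) (Mv w 1 / Mv w 2)) (pt (x 0) (x 1)) := by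
        rw [← pt_eta x]; rfl
    _ ≤ |Mv w 0 / Mv w 2 - x 0| + |Mv w 1 / Mv w 2 - x 1| := pt_dist_le _ _ _ _
    _ < r/4 + r/4 := add_lt_add k0 k1
    _ < r := by linarith

/-- **Hilbert's theorem.** The center of a circle cannot be constructed with only a
straightedge: there is a dense, line-closed set S, closed under intersections with the unit
circle, that does not contain the center (0,0). -/
theorem center_of_circle_not_constructible :
    ∃ S : Set Pt, Dense S ∧ LineClosed S ∧
      IntClosed S {p : Pt | dist p (pt 0 0) = 1} ∧ pt 0 0 ∉ S :=
  ⟨Sset, dense_Sset, lineClosed_Sset, intClosed_Sset, center_not_mem⟩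
end
end

section
/- Let Σ = {(x, x + √3 · y) : x, y ∈ ℚ} ⊆ ℝ². Then Σ is dense in ℝ², and for all points p1, p2, p3, p4 ∈ Σ with p1 ≠ p2 and p3 ≠ p4, the Euclidean inner product of the direction vectors satisfies ⟪p2 − p1, p4 − p3⟫ ≠ 0; in particular, no two lines each passing through two distinct points of Σ are perpendicular. (Hence a pair of perpendicular lines cannot be constructed using only a straightedge.) -/
noncomputable section

open scoped RealInnerProductSpace

lemma sqrt3_irr : Irrational (Real.sqrt 3) :=
  Nat.Prime.irrational_sqrt (by norm_num)

lemma rat_lin (A B : ℚ) (h : (A:ℝ) + Real.sqrt 3 * B = 0) : A = 0 ∧ B = 0 := by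
  by_cases hB : B = 0
  · subst hB; simp at h; exact ⟨by exact_mod_cast h, rfl⟩
  · exfalso
    have : Real.sqrt 3 = ((-A / B : ℚ) : ℝ) := by
      have hB' : (B:ℝ) ≠ 0 := by exact_mod_cast hB
      push_cast
      field_simp
      linarith [h]
    exact sqrt3_irr ⟨_, this.symm⟩

lemma no_sol23 (u v : ℚ) (h : 2*u*u = 3*v*v) : u = 0 ∧ v = 0 := by
  by_cases hv : v = 0
  · subst hv; constructor
    · nlinarith [sq_nonneg u]
    · rfl
  · exfalso
    have h6 : Irrational (Real.sqrt 6) := by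
      rw [show ((6:ℝ) = ((6:ℕ):ℝ)) by norm_num, irrational_sqrt_natCast_iff]
      rintro ⟨r, hr⟩
      have : r ≤ 6 := by nlinarith
      interval_cases r <;> omega
    have key : ((2*u/v : ℚ) : ℝ)^2 = 6 := by
      have hv' : (v:ℝ) ≠ 0 := by exact_mod_cast hv
      push_cast
      field_simp
      have : (2:ℝ)*u*u = 3*v*v := by exact_mod_cast h
      nlinarith [this]
    have heq : Real.sqrt 6 = |((2*u/v : ℚ) : ℝ)| := by
      rw [← key, Real.sqrt_sq_eq_abs]
    apply h6
    rcases abs_cases ((2*u/v : ℚ) : ℝ) with ⟨he, _⟩ | ⟨he, _⟩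
    · exact ⟨2*u/v, by rw [heq, he]⟩
    · exact ⟨-(2*u/v), by rw [heq, he]; push_cast; ring⟩

lemma inner_pt (x1 y1 x2 y2 x3 y3 x4 y4 : ℝ) :
    ⟪pt x2 y2 - pt x1 y1, pt x4 y4 - pt x3 y3⟫ =
      (x2-x1)*(x4-x3) + (y2-y1)*(y4-y3) := by
  simp [PiLp.inner_apply, RCLike.inner_apply, Fin.sum_univ_two, pt, starRingEnd_apply]
  ring

lemma dist_pt (p : Pt) (x y : ℝ) : dist p (pt x y) ^2 = (p 0 - x)^2 + (p 1 - y)^2 := by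
  rw [EuclideanSpace.dist_eq, Real.sq_sqrt (by positivity)]
  simp [Fin.sum_univ_two, pt, Real.dist_eq, sq_abs]

/-- Perpendicular lines cannot be constructed by straightedge: the set
Σ = {(x, x + √3·y) : x, y ∈ ℚ} is dense in ℝ², and for any two pairs of distinct points of Σ
the inner product of the corresponding direction vectors is nonzero, so no two lines through
points of Σ are perpendicular. -/
theorem perpendicular_lines_not_constructible :
    Dense {p : Pt | ∃ x y : ℚ, p = pt x (x + Real.sqrt 3 * y)} ∧
    ∀ p1 p2 p3 p4 : Pt,
      p1 ∈ {p : Pt | ∃ x y : ℚ, p = pt x (x + Real.sqrt 3 * y)} →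
      p2 ∈ {p : Pt | ∃ x y : ℚ, p = pt x (x + Real.sqrt 3 * y)} →
      p3 ∈ {p : Pt | ∃ x y : ℚ, p = pt x (x + Real.sqrt 3 * y)} →
      p4 ∈ {p : Pt | ∃ x y : ℚ, p = pt x (x + Real.sqrt 3 * y)} →
      p1 ≠ p2 → p3 ≠ p4 → ⟪p2 - p1, p4 - p3⟫ ≠ 0 := by
  have h3 : Real.sqrt 3 * Real.sqrt 3 = 3 := Real.mul_self_sqrt (by norm_num)
  have hs3pos : (0:ℝ) < Real.sqrt 3 := Real.sqrt_pos.mpr (by norm_num)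
  have hs3lt : Real.sqrt 3 < 2 := by
    nlinarith [h3, Real.sqrt_nonneg 3]
  constructor
  · rw [Metric.dense_iff]
    intro p r hr
    set a := p 0 with ha
    set b := p 1 with hb
    obtain ⟨x, hx⟩ := exists_rat_near a (show (0:ℝ) < r/8 by linarith)
    obtain ⟨y, hy⟩ := exists_rat_near ((b - x)/Real.sqrt 3) (show (0:ℝ) < r/8 by linarith)
    refine ⟨pt x (x + Real.sqrt 3 * y), ?_, x, y, rfl⟩
    rw [Metric.mem_ball]
    have h1 : |a - x| < r/8 := hx
    have h2 : |b - (x + Real.sqrt 3 * y)| < r/2 := by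
      have : b - (x + Real.sqrt 3 * y) = Real.sqrt 3 * ((b - x)/Real.sqrt 3 - y) := by
        field_simp
        ring
      rw [this, abs_mul, abs_of_pos hs3pos]
      calc Real.sqrt 3 * |(b - x)/Real.sqrt 3 - y| ≤ 2 * |(b - x)/Real.sqrt 3 - y| := by
            apply mul_le_mul_of_nonneg_right hs3lt.le (abs_nonneg _)
        _ < 2 * (r/8) := by linarith [abs_nonneg ((b - x)/Real.sqrt 3 - (y:ℝ)), hy]
        _ < r/2 := by linarith
      
    have hd2 : dist p (pt x (x + Real.sqrt 3 * y)) ^ 2 < r^2 := by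
      rw [dist_pt]
      have e1 : (a - x)^2 < (r/8)^2 := by
        have := abs_lt.mp h1
        nlinarith [this.1, this.2]
      have e2 : (b - (x + Real.sqrt 3 * y))^2 < (r/2)^2 := by
        have := abs_lt.mp h2
        nlinarith [this.1, this.2]
      rw [← ha, ← hb] at *
      nlinarith [e1, e2, hr]
    exact lt_of_pow_lt_pow_left₀ 2 hr.le (by rwa [dist_comm])
  · rintro p1 p2 p3 p4 ⟨x1, y1, rfl⟩ ⟨x2, y2, rfl⟩ ⟨x3, y3, rfl⟩ ⟨x4, y4, rfl⟩ h12 h34 hinner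
    rw [inner_pt] at hinner
    set u : ℚ := x2 - x1
    set v : ℚ := y2 - y1
    set s : ℚ := x4 - x3
    set t : ℚ := y4 - y3
    have hcast : ((2*u*s + 3*v*t : ℚ) : ℝ) + Real.sqrt 3 * ((u*t + v*s : ℚ) : ℝ) = 0 := by
      push_cast [u, v, s, t]
      linear_combination hinner - ((y2:ℝ) - y1)*((y4:ℝ)-y3)*h3
    obtain ⟨hA, hB⟩ := rat_lin _ _ hcast
    by_cases hdet : 2*s*s = 3*t*t
    · obtain ⟨hs0, ht0⟩ := no_sol23 s t hdet
      apply h34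
      have hx : x3 = x4 := by have : x4 - x3 = 0 := hs0; linarith
      have hy : y3 = y4 := by have : y4 - y3 = 0 := ht0; linarith
      rw [hx, hy]
    · have hu : u * (2*s*s - 3*t*t) = 0 := by linear_combination s*hA - 3*t*hB
      have hv : v * (2*s*s - 3*t*t) = 0 := by linear_combination 2*s*hB - t*hA
      have hd : 2*s*s - 3*t*t ≠ 0 := fun h => hdet (by linarith)
      have hu0 : u = 0 := by
        rcases mul_eq_zero.mp hu with h | h
        · exact h
        · exact absurd h hd
      have hv0 : v = 0 := by
        rcases mul_eq_zero.mp hv with h | h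
        · exact h
        · exact absurd h hd
      apply h12
      have hx : x1 = x2 := by have : x2 - x1 = 0 := hu0; linarith
      have hy : y1 = y2 := by have : y2 - y1 = 0 := hv0; linarith
      rw [hx, hy]
end
end

section
/- For all rational numbers a and b, (1 + a·√3) · (1 + b·√3) ≠ −1. -/
lemma not_isSquare_3 : ¬ IsSquare (3:ℕ) := by
  rintro ⟨r, hr⟩
  have : r ≤ 3 := by nlinarith
  interval_cases r <;> omega

lemma not_isSquare_6 : ¬ IsSquare (6:ℕ) := by
  rintro ⟨r, hr⟩
  have : r ≤ 6 := by nlinarith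
  interval_cases r <;> omega

/-- For all rationals a, b we have (1 + a√3)(1 + b√3) ≠ −1: the product of the slopes of two
lines through points of {(x, x + √3·y) : x, y ∈ ℚ} is never −1. -/
theorem slopes_product_ne_neg_one (a b : ℚ) :
    (1 + (a : ℝ) * Real.sqrt 3) * (1 + (b : ℝ) * Real.sqrt 3) ≠ -1 := by
  have irr3 : Irrational (Real.sqrt 3) := by
    rw [show (3:ℝ) = ((3:ℕ):ℝ) by norm_num, irrational_sqrt_natCast_iff]
    exact not_isSquare_3
  have s3 : Real.sqrt 3 * Real.sqrt 3 = 3 := Real.mul_self_sqrt (by norm_num)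
  intro h
  have key : ((a + b : ℚ) : ℝ) * Real.sqrt 3 = ((-2 - 3 * a * b : ℚ) : ℝ) := by
    push_cast
    linear_combination h - (a*b:ℝ) * s3
  by_cases hab : a + b = 0
  · have hb : b = -a := by linarith [hab]
    have h2 : ((-2 - 3 * a * b : ℚ) : ℝ) = 0 := by
      rw [← key, hab]; push_cast; ring
    have h2' : (-2 - 3 * a * b : ℚ) = 0 := by exact_mod_cast h2
    rw [hb] at h2'
    have h3 : (3:ℚ) * a ^ 2 = 2 := by nlinarith [h2']
    have irr6 : Irrational (Real.sqrt 6) := by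
      rw [show (6:ℝ) = ((6:ℕ):ℝ) by norm_num, irrational_sqrt_natCast_iff]
      exact not_isSquare_6
    have h6r : ((3 * |a| : ℚ) : ℝ) ^ 2 = 6 := by
      push_cast
      rw [mul_pow, sq_abs]
      exact_mod_cast (by nlinarith [h3] : (3:ℚ)^2 * a^2 = 6)
    have h6 : Real.sqrt 6 = ((3 * |a| : ℚ) : ℝ) := by
      rw [← h6r, Real.sqrt_sq (by positivity)]
    exact irr6 ⟨3 * |a|, h6.symm⟩
  · have hne : ((a + b : ℚ) : ℝ) ≠ 0 := Rat.cast_ne_zero.mpr hab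
    have hs : Real.sqrt 3 = ((-2 - 3 * a * b : ℚ) : ℝ) / ((a + b : ℚ) : ℝ) := by
      rw [eq_div_iff hne]
      linear_combination key
    exact irr3 ⟨(-2 - 3 * a * b) / (a + b), by rw [Rat.cast_div]; exact hs.symm⟩
end

section
/- Let K be a subfield of ℝ such that every nonnegative element of K has a square root in K (for all x ∈ K with x ≥ 0 there is y ∈ K with y² = x). Let p, q ∈ K × K be distinct points, and let z ∈ ℝ² be a point lying on the line through p and q and on the parabola {(x, x²) : x ∈ ℝ}. Then z ∈ K × K. -/
/-- If K is a square-root-closed subfield of ℝ, then the set K × K of points of ℝ² with both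
coordinates in K is closed under taking intersection points of its lines with the parabola
y = x². -/
theorem sqrt_closed_field_closed_under_parabola_intersections (K : Subfield ℝ)
    (hK : ∀ x : ℝ, x ∈ K → 0 ≤ x → ∃ y ∈ K, y ^ 2 = x)
    (p q : ℝ × ℝ) (hp1 : p.1 ∈ K) (hp2 : p.2 ∈ K) (hq1 : q.1 ∈ K) (hq2 : q.2 ∈ K)
    (hpq : p ≠ q) (z : ℝ × ℝ)
    (hline : ∃ t : ℝ, z = p + t • (q - p))
    (hparab : z.2 = z.1 ^ 2) :
    z.1 ∈ K ∧ z.2 ∈ K := by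
  obtain ⟨t, hz⟩ := hline
  have hz1 : z.1 = p.1 + t * (q.1 - p.1) := by rw [hz]; simp
  have hz2 : z.2 = p.2 + t * (q.2 - p.2) := by rw [hz]; simp
  set d := q.1 - p.1 with hd
  set e := q.2 - p.2 with he
  suffices h1 : z.1 ∈ K by
    refine ⟨h1, ?_⟩
    rw [hparab]
    exact pow_mem h1 2
  by_cases hd0 : d = 0
  · rw [hz1, hd0]
    simpa using hp1
  · have key : (2 * d * z.1 - e) ^ 2 = e ^ 2 + 4 * d * (d * p.2 - e * p.1) := by
      have heq : p.2 + t * e = (p.1 + t * d) ^ 2 := by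
        rw [← hz1, ← hz2, hparab]
      rw [hz1]
      linear_combination (-4*d^2)*heq
    have hdK : d ∈ K := K.sub_mem hq1 hp1
    have heK : e ∈ K := K.sub_mem hq2 hp2
    have hDK : e ^ 2 + 4 * d * (d * p.2 - e * p.1) ∈ K := by
      refine K.add_mem (pow_mem heK 2) (K.mul_mem (K.mul_mem ?_ hdK) (K.sub_mem (K.mul_mem hdK hp2) (K.mul_mem heK hp1)))
      exact_mod_cast natCast_mem K 4
    obtain ⟨y, hyK, hy2⟩ := hK _ hDK (by rw [← key]; positivity)
    have hsq : y ^ 2 = (2 * d * z.1 - e) ^ 2 := by rw [hy2, key]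
    have : y = 2 * d * z.1 - e ∨ y = -(2 * d * z.1 - e) := sq_eq_sq_iff_eq_or_eq_neg.mp hsq
    have hmem : 2 * d * z.1 - e ∈ K := by
      rcases this with h | h
      · rw [← h]; exact hyK
      · have : 2 * d * z.1 - e = -y := by rw [h]; ring
        rw [this]; exact K.neg_mem hyK
    have : z.1 = (2 * d * z.1 - e + e) / (2 * d) := by
      field_simp
      ring
    rw [this]
    exact K.div_mem (K.add_mem hmem heK) (K.mul_mem (by exact_mod_cast natCast_mem K 2) hdK)
end

section
/- Let K be a subfield of ℝ such that every nonnegative element of K has a square root in K. Let a, b, s ∈ K with s > 0, and let C = {(x, y) ∈ ℝ² : (x − a)² + (y − b)² = s} be the circle with center (a, b) and squared radius s. Let p, q ∈ K × K be distinct points, and let z ∈ ℝ² lie on the line through p and q and on C. Then z ∈ K × K. -/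
/-- If K is a square-root-closed subfield of ℝ, then the set K × K of points of ℝ² with both
coordinates in K is closed under taking intersection points of its lines with any circle whose
center coordinates and squared radius lie in K. -/
theorem sqrt_closed_field_closed_under_circle_intersections (K : Subfield ℝ)
    (hK : ∀ x : ℝ, x ∈ K → 0 ≤ x → ∃ y ∈ K, y ^ 2 = x)
    (a b s : ℝ) (ha : a ∈ K) (hb : b ∈ K) (hs : s ∈ K) (hspos : 0 < s)
    (p q : ℝ × ℝ) (hp1 : p.1 ∈ K) (hp2 : p.2 ∈ K) (hq1 : q.1 ∈ K) (hq2 : q.2 ∈ K)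
    (hpq : p ≠ q) (z : ℝ × ℝ)
    (hline : ∃ t : ℝ, z = p + t • (q - p))
    (hcirc : (z.1 - a) ^ 2 + (z.2 - b) ^ 2 = s) :
    z.1 ∈ K ∧ z.2 ∈ K := by
  obtain ⟨t, hz⟩ := hline
  have hz1 : z.1 = p.1 + t * (q.1 - p.1) := by rw [hz]; simp
  have hz2 : z.2 = p.2 + t * (q.2 - p.2) := by rw [hz]; simp
  have h2K : (2:ℝ) ∈ K := by have := K.add_mem K.one_mem K.one_mem; norm_num at this; norm_num
  have h4K : (4:ℝ) ∈ K := by have := K.add_mem h2K h2K; norm_num at this; norm_num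
  set A : ℝ := (q.1 - p.1) ^ 2 + (q.2 - p.2) ^ 2 with hAdef
  set B : ℝ := 2 * ((p.1 - a) * (q.1 - p.1) + (p.2 - b) * (q.2 - p.2)) with hBdef
  set C : ℝ := (p.1 - a) ^ 2 + (p.2 - b) ^ 2 - s with hCdef
  have hAK : A ∈ K := K.add_mem (K.pow_mem (K.sub_mem hq1 hp1) 2)
    (K.pow_mem (K.sub_mem hq2 hp2) 2)
  have hBK : B ∈ K := K.mul_mem h2K
    (K.add_mem (K.mul_mem (K.sub_mem hp1 ha) (K.sub_mem hq1 hp1))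
      (K.mul_mem (K.sub_mem hp2 hb) (K.sub_mem hq2 hp2)))
  have hCK : C ∈ K := K.sub_mem (K.add_mem (K.pow_mem (K.sub_mem hp1 ha) 2)
    (K.pow_mem (K.sub_mem hp2 hb) 2)) hs
  have hAne : A ≠ 0 := by
    intro h
    apply hpq
    have h1 : q.1 - p.1 = 0 := by nlinarith [sq_nonneg (q.1 - p.1), sq_nonneg (q.2 - p.2)]
    have h2 : q.2 - p.2 = 0 := by nlinarith [sq_nonneg (q.1 - p.1), sq_nonneg (q.2 - p.2)]
    exact Prod.ext (by linarith) (by linarith)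
  have hquad : A * t ^ 2 + B * t + C = 0 := by
    rw [hz1, hz2] at hcirc
    linear_combination hcirc
  have hD : (2 * A * t + B) ^ 2 = B ^ 2 - 4 * A * C := by linear_combination 4 * A * hquad
  have hDnn : 0 ≤ B ^ 2 - 4 * A * C := hD ▸ sq_nonneg _
  have hDK : B ^ 2 - 4 * A * C ∈ K :=
    K.sub_mem (K.pow_mem hBK 2) (K.mul_mem (K.mul_mem h4K hAK) hCK)
  obtain ⟨r, hrK, hr2⟩ := hK _ hDK hDnn
  have hfac : (2 * A * t + B - r) * (2 * A * t + B + r) = 0 := by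
    linear_combination hD - hr2
  have htK : t ∈ K := by
    rcases mul_eq_zero.mp hfac with h | h
    · have ht : t = (r - B) / (2 * A) := by field_simp; linarith
      rw [ht]
      exact K.div_mem (K.sub_mem hrK hBK) (K.mul_mem h2K hAK)
    · have ht : t = (-r - B) / (2 * A) := by field_simp; linarith
      rw [ht]
      exact K.div_mem (K.sub_mem (K.neg_mem hrK) hBK) (K.mul_mem h2K hAK)
  constructor
  · rw [hz1]; exact K.add_mem hp1 (K.mul_mem htK (K.sub_mem hq1 hp1))
  · rw [hz2]; exact K.add_mem hp2 (K.mul_mem htK (K.sub_mem hq2 hp2))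
end
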